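/- arXiv:math/0301247 — 3 statements merged into one kernel-verified Lean document; each statement's English description precedes it below -/
import Mathlib

section
/- For every n ≥ 2, the subgroup D_{n-1} = ⟨ε_{n,1}, ε_{n,2}, …, ε_{n,n-1}, ε_{1,n}, ε_{2,n}, …, ε_{n-1,n}⟩ is a normal subgroup of the group Cb_n of basis-conjugating automorphisms of the free group F_n. -/
/-- The basis-conjugating automorphism ε_{ij} of the free group:
`x_i ↦ x_j⁻¹ x_i x_j`, `x_l ↦ x_l` for `l ≠ i`. -/
def eps {n : ℕ} (i j : Fin n) : MulAut (FreeGroup (Fin n)) :=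
  MonoidHom.toMulEquiv
    (FreeGroup.lift fun l =>
      if l = i then (FreeGroup.of j)⁻¹ * FreeGroup.of i * FreeGroup.of j else FreeGroup.of l)
    (FreeGroup.lift fun l =>
      if l = i then FreeGroup.of j * FreeGroup.of i * (FreeGroup.of j)⁻¹ else FreeGroup.of l)
    (by ext l; by_cases h : l = i <;> by_cases h2 : j = i <;> simp [h, h2, mul_assoc])
    (by ext l; by_cases h : l = i <;> by_cases h2 : j = i <;> simp [h, h2, mul_assoc])

/-- The group `Cb n` of basis-conjugating automorphisms: the subgroup of `Aut(F_n)`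
generated by all `ε_{ij}`, `i ≠ j`. -/
def Cb (n : ℕ) : Subgroup (MulAut (FreeGroup (Fin n))) :=
  Subgroup.closure {e | ∃ i j : Fin n, i ≠ j ∧ e = eps i j}

/-- The subgroup `D_j` (0-based index: the paper's `D_i` is `Dsub i`), generated by
`ε_{j,t}` and `ε_{t,j}` for all `t < j`. -/
def Dsub {n : ℕ} (j : Fin n) : Subgroup (MulAut (FreeGroup (Fin n))) :=
  Subgroup.closure {e | ∃ t : Fin n, t < j ∧ (e = eps j t ∨ e = eps t j)}

@[simp] lemma eps_of {n : ℕ} (i j l : Fin n) :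
    eps i j (FreeGroup.of l) =
      if l = i then (FreeGroup.of j)⁻¹ * FreeGroup.of i * FreeGroup.of j else FreeGroup.of l := by
  simp [eps, MonoidHom.toMulEquiv]

@[simp] lemma eps_inv_of {n : ℕ} (i j l : Fin n) :
    (eps i j)⁻¹ (FreeGroup.of l) =
      if l = i then FreeGroup.of j * FreeGroup.of i * (FreeGroup.of j)⁻¹ else FreeGroup.of l := by
  simp [eps, MonoidHom.toMulEquiv, MulAut.inv_def, MulEquiv.symm]

@[simp] lemma eps_symm_of {n : ℕ} (i j l : Fin n) :
    (eps i j).symm (FreeGroup.of l) =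
      if l = i then FreeGroup.of j * FreeGroup.of i * (FreeGroup.of j)⁻¹ else FreeGroup.of l :=
  eps_inv_of i j l

lemma mulAut_ext {n : ℕ} {f g : MulAut (FreeGroup (Fin n))}
    (h : ∀ a, f (FreeGroup.of a) = g (FreeGroup.of a)) : f = g := by
  apply MulEquiv.toMonoidHom_injective
  exact FreeGroup.ext_hom _ _ h

section
variable {n : ℕ} (i j m : Fin n)

lemma eps_comm (a b : Fin n) (h1 : i ≠ a) (h2 : i ≠ b) (h3 : a ≠ j) :
    eps i j * eps a b = eps a b * eps i j := by
  apply mulAut_ext; intro l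
  by_cases hl1 : l = i <;> by_cases hl2 : l = a <;>
    simp_all [MulAut.mul_apply, mul_assoc, h1, h2, h3, h1.symm, h2.symm, h3.symm]

lemma L2 (hij : i ≠ j) (him : i ≠ m) (hjm : j ≠ m) :
    eps i j * eps m i * (eps i j)⁻¹ = (eps m j)⁻¹ * eps m i * eps m j := by
  apply mulAut_ext; intro l
  by_cases hl1 : l = i <;> by_cases hl2 : l = j <;> by_cases hl3 : l = m <;>
    simp_all [MulAut.mul_apply, mul_assoc, hij.symm, him.symm, hjm.symm, hij, him, hjm]

lemma L2' (hij : i ≠ j) (him : i ≠ m) (hjm : j ≠ m) :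
    (eps i j)⁻¹ * eps m i * eps i j = eps m j * eps m i * (eps m j)⁻¹ := by
  apply mulAut_ext; intro l
  by_cases hl1 : l = i <;> by_cases hl2 : l = j <;> by_cases hl3 : l = m <;>
    simp_all [MulAut.mul_apply, mul_assoc, hij.symm, him.symm, hjm.symm, hij, him, hjm]

lemma L3 (hij : i ≠ j) (him : i ≠ m) (hjm : j ≠ m) :
    eps i j * eps i m * (eps i j)⁻¹ = (eps m j)⁻¹ * eps i m * eps m j := by
  apply mulAut_ext; intro l
  by_cases hl1 : l = i <;> by_cases hl2 : l = j <;> by_cases hl3 : l = m <;>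
    simp_all [MulAut.mul_apply, mul_assoc, hij.symm, him.symm, hjm.symm, hij, him, hjm]

lemma L3' (hij : i ≠ j) (him : i ≠ m) (hjm : j ≠ m) :
    (eps i j)⁻¹ * eps i m * eps i j = eps m j * eps i m * (eps m j)⁻¹ := by
  apply mulAut_ext; intro l
  by_cases hl1 : l = i <;> by_cases hl2 : l = j <;> by_cases hl3 : l = m <;>
    simp_all [MulAut.mul_apply, mul_assoc, hij.symm, him.symm, hjm.symm, hij, him, hjm]

lemma L4 (hij : i ≠ j) (him : i ≠ m) (hjm : j ≠ m) :
    eps i j * eps j m * (eps i j)⁻¹ =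
      (eps m j)⁻¹ * (eps i m)⁻¹ * eps m j * eps i m * eps j m := by
  apply mulAut_ext; intro l
  by_cases hl1 : l = i <;> by_cases hl2 : l = j <;> by_cases hl3 : l = m <;>
    simp_all [MulAut.mul_apply, mul_assoc, hij.symm, him.symm, hjm.symm, hij, him, hjm]

lemma L4' (hij : i ≠ j) (him : i ≠ m) (hjm : j ≠ m) :
    (eps i j)⁻¹ * eps j m * eps i j =
      eps m j * (eps i m)⁻¹ * (eps m j)⁻¹ * eps i m * eps j m := by
  apply mulAut_ext; intro l
  by_cases hl1 : l = i <;> by_cases hl2 : l = j <;> by_cases hl3 : l = m <;>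
    simp_all [MulAut.mul_apply, mul_assoc, hij.symm, him.symm, hjm.symm, hij, him, hjm]
end

lemma conj_helper {n : ℕ} {m : Fin n} (g : MulAut (FreeGroup (Fin n)))
    (h : ∀ e ∈ {e : MulAut (FreeGroup (Fin n)) | ∃ t : Fin n, t < m ∧ (e = eps m t ∨ e = eps t m)},
      g * e * g⁻¹ ∈ Dsub m) :
    ∀ d ∈ Dsub m, g * d * g⁻¹ ∈ Dsub m := by
  intro d hd
  induction hd using Subgroup.closure_induction with
  | mem e he => exact h e he
  | one => simpa using (Dsub m).one_mem
  | mul d1 d2 _ _ h1 h2 =>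
      have : g * (d1 * d2) * g⁻¹ = (g * d1 * g⁻¹) * (g * d2 * g⁻¹) := by group
      rw [this]; exact mul_mem h1 h2
  | inv d _ h1 =>
      have : g * d⁻¹ * g⁻¹ = (g * d * g⁻¹)⁻¹ := by group
      rw [this]; exact inv_mem h1

/-- For every `n ≥ 2` (here `n + 2`), the subgroup `D_{n-1}` generated by
`ε_{n,1}, …, ε_{n,n-1}, ε_{1,n}, …, ε_{n-1,n}` is a normal subgroup of `Cb_n`. -/
theorem D_last_normal_in_Cb (n : ℕ) :
    Dsub (Fin.last (n + 1)) ≤ Cb (n + 2) ∧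
      ((Dsub (Fin.last (n + 1))).subgroupOf (Cb (n + 2))).Normal := by
  set m : Fin (n + 2) := Fin.last (n + 1) with hm
  have hgen : ∀ t : Fin (n + 2), t < m → eps m t ∈ Dsub m ∧ eps t m ∈ Dsub m := by
    intro t ht
    exact ⟨Subgroup.subset_closure ⟨t, ht, Or.inl rfl⟩,
      Subgroup.subset_closure ⟨t, ht, Or.inr rfl⟩⟩
  have hDle : Dsub m ≤ Cb (n + 2) := by
    rw [Dsub]
    refine (Subgroup.closure_le _).2 ?_
    rintro e ⟨t, ht, (rfl | rfl)⟩
    · exact Subgroup.subset_closure ⟨m, t, ne_of_gt ht, rfl⟩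
    · exact Subgroup.subset_closure ⟨t, m, ne_of_lt ht, rfl⟩
  have key : ∀ g ∈ Cb (n + 2),
      (∀ d ∈ Dsub m, g * d * g⁻¹ ∈ Dsub m) ∧ (∀ d ∈ Dsub m, g⁻¹ * d * g ∈ Dsub m) := by
    intro g hg
    induction hg using Subgroup.closure_induction with
    | one => constructor <;> intro d hd <;> simpa using hd
    | mul g1 g2 _ _ h1 h2 =>
        constructor <;> intro d hd
        · have : (g1 * g2) * d * (g1 * g2)⁻¹ = g1 * (g2 * d * g2⁻¹) * g1⁻¹ := by group
          rw [this]; exact h1.1 _ (h2.1 d hd)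
        · have : (g1 * g2)⁻¹ * d * (g1 * g2) = g2⁻¹ * (g1⁻¹ * d * g1) * g2 := by group
          rw [this]; exact h2.2 _ (h1.2 d hd)
    | inv g1 _ h1 =>
        refine ⟨fun d hd => ?_, fun d hd => ?_⟩
        · simpa using h1.2 d hd
        · simpa using h1.1 d hd
    | mem g hgm =>
        obtain ⟨i, j, hij, rfl⟩ := hgm
        by_cases him : i = m
        · subst him
          have hgD : eps m j ∈ Dsub m := (hgen j (lt_of_le_of_ne (Fin.le_last j) (by
            intro h; exact hij h.symm))).1
          constructor <;> intro d hd
          · exact mul_mem (mul_mem hgD hd) (inv_mem hgD)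
          · exact mul_mem (mul_mem (inv_mem hgD) hd) hgD
        · by_cases hjm : j = m
          · subst hjm
            have hgD : eps i m ∈ Dsub m :=
              (hgen i (lt_of_le_of_ne (Fin.le_last i) him)).2
            constructor <;> intro d hd
            · exact mul_mem (mul_mem hgD hd) (inv_mem hgD)
            · exact mul_mem (mul_mem (inv_mem hgD) hd) hgD
          · -- i, j < m
            have hi : i < m := lt_of_le_of_ne (Fin.le_last i) him
            have hj : j < m := lt_of_le_of_ne (Fin.le_last j) hjm
            have him' : i ≠ m := him
            have hjm' : j ≠ m := hjm
            constructor
            · refine conj_helper _ ?_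
              rintro e ⟨t, ht, (rfl | rfl)⟩
              · -- e = eps m t
                by_cases hti : t = i
                · subst hti
                  rw [L2 t j m hij him' hjm']
                  exact mul_mem (mul_mem (inv_mem (hgen j hj).1) (hgen t hi).1) (hgen j hj).1
                · have hcomm : eps i j * eps m t = eps m t * eps i j :=
                    eps_comm i j m t him' (fun h => hti h.symm) (Ne.symm hjm')
                  have : eps i j * eps m t * (eps i j)⁻¹ = eps m t := by
                    rw [hcomm]; group
                  rw [this]; exact (hgen t ht).1
              · -- e = eps t m
                by_cases hti : t = i
                · subst hti
                  rw [L3 t j m hij him' hjm']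
                  exact mul_mem (mul_mem (inv_mem (hgen j hj).1) (hgen t hi).2) (hgen j hj).1
                · by_cases htj : t = j
                  · subst htj
                    rw [L4 i t m hij him' hjm']
                    exact mul_mem (mul_mem (mul_mem (mul_mem (inv_mem (hgen t hj).1)
                      (inv_mem (hgen i hi).2)) (hgen t hj).1) (hgen i hi).2) (hgen t ht).2
                  · have hcomm : eps i j * eps t m = eps t m * eps i j :=
                      eps_comm i j t m (fun h => hti h.symm) him' (fun h => htj h)
                    have : eps i j * eps t m * (eps i j)⁻¹ = eps t m := by
                      rw [hcomm]; group
                    rw [this]; exact (hgen t ht).2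
            · refine conj_helper _ ?_
              rintro e ⟨t, ht, (rfl | rfl)⟩ <;> rw [inv_inv]
              · by_cases hti : t = i
                · subst hti
                  rw [L2' t j m hij him' hjm']
                  exact mul_mem (mul_mem (hgen j hj).1 (hgen t hi).1) (inv_mem (hgen j hj).1)
                · have hcomm : eps i j * eps m t = eps m t * eps i j :=
                    eps_comm i j m t him' (fun h => hti h.symm) (Ne.symm hjm')
                  have : (eps i j)⁻¹ * eps m t * eps i j = eps m t := by
                    rw [mul_assoc, ← hcomm]; group
                  rw [this]; exact (hgen t ht).1
              · by_cases hti : t = i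
                · subst hti
                  rw [L3' t j m hij him' hjm']
                  exact mul_mem (mul_mem (hgen j hj).1 (hgen t hi).2) (inv_mem (hgen j hj).1)
                · by_cases htj : t = j
                  · subst htj
                    rw [L4' i t m hij him' hjm']
                    exact mul_mem (mul_mem (mul_mem (mul_mem (hgen t hj).1
                      (inv_mem (hgen i hi).2)) (inv_mem (hgen t hj).1)) (hgen i hi).2)
                      (hgen t ht).2
                  · have hcomm : eps i j * eps t m = eps t m * eps i j :=
                      eps_comm i j t m (fun h => hti h.symm) him' (fun h => htj h)
                    have : (eps i j)⁻¹ * eps t m * eps i j = eps t m := by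
                      rw [mul_assoc, ← hcomm]; group
                    rw [this]; exact (hgen t ht).2
  refine ⟨hDle, ⟨?_⟩⟩
  rintro ⟨d, hdC⟩ hd ⟨g, hgC⟩
  rw [Subgroup.mem_subgroupOf] at hd ⊢
  simpa using (key g hgC).1 d hd
end

section
/- In Aut(F_n) the generators of the pure braid group P_n can be expressed through the basis-conjugating automorphisms as follows: a_{i,i+1} = ε_{i,i+1}^{-1} ε_{i+1,i}^{-1} for i = 1,…,n−1, and for 2 ≤ i+1 < j ≤ n, a_{ij} = ε_{j-1,i} ε_{j-2,i} ⋯ ε_{i+1,i} (ε_{ij}^{-1} ε_{ji}^{-1}) ε_{i+1,i}^{-1} ⋯ ε_{j-2,i}^{-1} ε_{j-1,i}^{-1} = ε_{j-1,j}^{-1} ε_{j-2,j}^{-1} ⋯ ε_{i+1,j}^{-1} (ε_{ij}^{-1} ε_{ji}^{-1}) ε_{i+1,j} ⋯ ε_{j-2,j} ε_{j-1,j}. -/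
/-- The braid automorphism: `x_i ↦ x_i x_j x_i⁻¹`, `x_j ↦ x_i`, `x_l ↦ x_l`. -/
def braidGen {n : ℕ} (i j : Fin n) : MulAut (FreeGroup (Fin n)) :=
  MonoidHom.toMulEquiv
    (FreeGroup.lift fun l =>
      if l = i then FreeGroup.of i * FreeGroup.of j * (FreeGroup.of i)⁻¹
      else if l = j then FreeGroup.of i else FreeGroup.of l)
    (FreeGroup.lift fun l =>
      if l = i then FreeGroup.of j
      else if l = j then (FreeGroup.of j)⁻¹ * FreeGroup.of i * FreeGroup.of j
      else FreeGroup.of l)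
    (by ext l; by_cases h : l = i <;> by_cases h2 : l = j <;> by_cases h3 : j = i <;>
      simp_all [mul_assoc])
    (by ext l; by_cases h : l = i <;> by_cases h2 : l = j <;> by_cases h3 : j = i <;>
      simp_all [mul_assoc])

/-- The braid generator σ_k (0-based), the identity if `k` is out of range. -/
def sigmaNat (n k : ℕ) : MulAut (FreeGroup (Fin n)) :=
  if h : k + 1 < n then braidGen ⟨k, by omega⟩ ⟨k + 1, h⟩ else 1

/-- The Mathlib product `σ_{i+1} * σ_{i+2} * ⋯ * σ_{j-1}`, i.e. the transcription of the
paper's word `σ_{j-1} σ_{j-2} ⋯ σ_{i+1}` (0-based indices). -/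
def aConj (n i j : ℕ) : MulAut (FreeGroup (Fin n)) :=
  (((List.range (j - 1 - i)).map fun t => sigmaNat n (j - 1 - t)).reverse).prod

/-- The pure braid generator `a_{ij} = σ_{j-1} ⋯ σ_{i+1} σ_i² σ_{i+1}⁻¹ ⋯ σ_{j-1}⁻¹`
(paper's word, 0-based indices `i < j`; for `j = i + 1` it is `σ_i²`),
transcribed into Mathlib's composition order. -/
def a0 (n i j : ℕ) : MulAut (FreeGroup (Fin n)) :=
  (aConj n i j)⁻¹ * (sigmaNat n i) ^ 2 * aConj n i j

open FreeGroup

namespace PBAux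

variable {n : ℕ}

lemma aut_ext {f g : MulAut (FreeGroup (Fin n))}
    (h : ∀ a, f (of a) = g (of a)) : f = g :=
  MulEquiv.toMonoidHom_injective (FreeGroup.ext_hom _ _ h)

lemma eps_apply (i j l : Fin n) :
    eps i j (of l) = if l = i then (of j)⁻¹ * of i * of j else of l := by
  simp [eps, MonoidHom.toMulEquiv]

lemma eps_inv_apply (i j l : Fin n) :
    (eps i j)⁻¹ (of l) = if l = i then of j * of i * (of j)⁻¹ else of l := by
  simp [eps, MonoidHom.toMulEquiv, MulAut.inv_def]

lemma braid_apply (i j l : Fin n) :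
    braidGen i j (of l) =
      if l = i then of i * of j * (of i)⁻¹ else if l = j then of i else of l := by
  simp [braidGen, MonoidHom.toMulEquiv]

lemma braid_inv_apply (i j l : Fin n) :
    (braidGen i j)⁻¹ (of l) =
      if l = i then of j else if l = j then (of j)⁻¹ * of i * of j else of l := by
  simp [braidGen, MonoidHom.toMulEquiv, MulAut.inv_def]

lemma sigmaNat_eq (k : ℕ) (h : k + 1 < n) :
    sigmaNat n k = braidGen (⟨k, by omega⟩ : Fin n) ⟨k + 1, h⟩ := dif_pos h

lemma aut_mul3 (f : MulAut (FreeGroup (Fin n))) (a b c : FreeGroup (Fin n)) :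
    f (a * b * c) = f a * f b * f c := by simp

lemma aut_inv3 (f : MulAut (FreeGroup (Fin n))) (a b c : FreeGroup (Fin n)) :
    f (a⁻¹ * b * c) = (f a)⁻¹ * f b * f c := by simp

lemma aut_mul (f : MulAut (FreeGroup (Fin n))) (a b : FreeGroup (Fin n)) :
    f (a * b) = f a * f b := by simp

lemma aut_inv_single (f : MulAut (FreeGroup (Fin n))) (a : FreeGroup (Fin n)) :
    f a⁻¹ = (f a)⁻¹ := by simp

end PBAux
open FreeGroup

namespace PBAux2
open PBAux

variable {n : ℕ}

/-- Action of the product ε_{i+1,i} ⋯ ε_{j-1,i} (reversed list). -/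
lemma L1_apply (i j d : ℕ) (h : i + 1 + d ≤ j) (hj : j < n) (l : Fin n) :
    ((((List.range d).map fun t =>
        eps (⟨j - 1 - t, by omega⟩ : Fin n) (⟨i, by omega⟩ : Fin n)).reverse).prod) (of l) =
      if j - d ≤ l.val ∧ l.val < j then
        (of (⟨i, by omega⟩ : Fin n))⁻¹ * of l * of (⟨i, by omega⟩ : Fin n)
      else of l := by
  induction d with
  | zero =>
    simp only [List.range_zero, List.map_nil, List.reverse_nil, List.prod_nil,
      MulAut.one_apply]
    rw [if_neg (by omega)]
  | succ d IH =>
    rw [List.range_succ, List.map_append, List.reverse_append]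
    simp only [List.map_cons, List.map_nil, List.reverse_cons, List.reverse_nil,
      List.nil_append, List.singleton_append, List.prod_cons]
    rw [MulAut.mul_apply, IH (by omega)]
    by_cases hc : j - d ≤ l.val ∧ l.val < j
    · rw [if_pos hc, aut_inv3, eps_apply, eps_apply,
        if_neg (by simp [Fin.ext_iff]; omega), if_neg (by simp [Fin.ext_iff]; omega),
        if_pos (by omega : j - (d+1) ≤ l.val ∧ l.val < j)]
    · rw [if_neg hc, eps_apply]
      by_cases hl : l = (⟨j - 1 - d, by omega⟩ : Fin n)
      · rw [if_pos hl, if_pos (by rw [hl]; constructor <;> simp <;> omega), hl]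
      · rw [if_neg hl, if_neg (by simp [Fin.ext_iff] at hl; omega)]

/-- Action of the product ε_{j-1,j} ⋯ ε_{i+1,j} (unreversed list). -/
lemma P_apply (i j d : ℕ) (h : i + 1 + d ≤ j) (hj : j < n) (l : Fin n) :
    (((List.range d).map fun t =>
        eps (⟨j - 1 - t, by omega⟩ : Fin n) (⟨j, hj⟩ : Fin n)).prod) (of l) =
      if j - d ≤ l.val ∧ l.val < j then
        (of (⟨j, hj⟩ : Fin n))⁻¹ * of l * of (⟨j, hj⟩ : Fin n)
      else of l := by
  induction d generalizing l with
  | zero =>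
    simp only [List.range_zero, List.map_nil, List.prod_nil, MulAut.one_apply]
    rw [if_neg (by omega)]
  | succ d IH =>
    rw [List.range_succ, List.map_append]
    simp only [List.map_cons, List.map_nil, List.prod_append, List.prod_cons,
      List.prod_nil, mul_one]
    rw [MulAut.mul_apply, eps_apply]
    by_cases hl : l = (⟨j - 1 - d, by omega⟩ : Fin n)
    · rw [if_pos hl, aut_inv3, IH (by omega) _, IH (by omega) _,
        if_neg (by simp only [Fin.val_mk]; omega), if_neg (by simp only [Fin.val_mk]; omega),
        if_pos (by rw [hl]; exact ⟨by simp only [Fin.val_mk]; omega,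
          by simp only [Fin.val_mk]; omega⟩), hl]
    · rw [if_neg hl, IH (by omega) _]
      by_cases hc : j - d ≤ l.val ∧ l.val < j
      · rw [if_pos hc, if_pos (by omega)]
      · rw [if_neg hc, if_neg (by simp [Fin.ext_iff] at hl; omega)]

end PBAux2
open FreeGroup

namespace PBAux3
open PBAux

variable {n : ℕ}

lemma aConj_base (n i : ℕ) : aConj n i (i+1) = 1 := by
  simp [aConj]

lemma aConj_succ (n i j : ℕ) (hij : i < j) :
    aConj n i (j+1) = aConj n i j * sigmaNat n j := by
  unfold aConj
  have h1 : j + 1 - 1 - i = (j - 1 - i) + 1 := by omega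
  rw [h1, List.range_succ_eq_map, List.map_cons, List.map_map]
  have h2 : ((fun t => sigmaNat n (j + 1 - 1 - t)) ∘ Nat.succ) =
      fun t => sigmaNat n (j - 1 - t) := by
    funext t; simp only [Function.comp]; congr 1; omega
  rw [h2, List.reverse_cons, List.prod_append, List.prod_cons, List.prod_nil, mul_one]
  norm_num

lemma a0_base (n i : ℕ) : a0 n i (i+1) = (sigmaNat n i) ^ 2 := by
  simp [a0, aConj_base]

lemma a0_succ (n i j : ℕ) (hij : i < j) :
    a0 n i (j+1) = (sigmaNat n j)⁻¹ * a0 n i j * sigmaNat n j := by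
  unfold a0
  rw [aConj_succ n i j hij, mul_inv_rev]
  group

/-- The common value: action of `a0` (and of both ε-words) on generators. -/
def phiW (i j : ℕ) (hi : i < n) (hj : j < n) (l : Fin n) : FreeGroup (Fin n) :=
  if l.val = i then
    of (⟨i, hi⟩ : Fin n) * of (⟨j, hj⟩ : Fin n) * of (⟨i, hi⟩ : Fin n) *
      (of (⟨j, hj⟩ : Fin n))⁻¹ * (of (⟨i, hi⟩ : Fin n))⁻¹
  else if l.val = j then
    of (⟨i, hi⟩ : Fin n) * of (⟨j, hj⟩ : Fin n) * (of (⟨i, hi⟩ : Fin n))⁻¹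
  else if i < l.val ∧ l.val < j then
    of (⟨i, hi⟩ : Fin n) * of (⟨j, hj⟩ : Fin n) * (of (⟨i, hi⟩ : Fin n))⁻¹ *
      (of (⟨j, hj⟩ : Fin n))⁻¹ * of l * of (⟨j, hj⟩ : Fin n) * of (⟨i, hi⟩ : Fin n) *
      (of (⟨j, hj⟩ : Fin n))⁻¹ * (of (⟨i, hi⟩ : Fin n))⁻¹
  else of l

lemma a0_apply (i j : ℕ) (hij : i < j) :
    ∀ (hj : j < n) (l : Fin n),
      a0 n i j (of l) = phiW i j (lt_trans hij hj) hj l := by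
  induction j, hij using Nat.le_induction with
  | base =>
    intro hj l
    have hin : i < n := by omega
    rw [a0_base, sq, MulAut.mul_apply, sigmaNat_eq i hj, braid_apply]
    by_cases hv1 : (l : ℕ) = i
    · have h1 : l = (⟨i, hin⟩ : Fin n) := Fin.ext hv1
      subst h1
      rw [if_pos rfl]
      simp only [aut_mul, aut_inv_single, braid_apply, phiW, Fin.ext_iff, Fin.val_mk]
      split_ifs <;> first | rfl | (exfalso; omega) | (group; done)
    · rw [if_neg (Fin.ne_of_val_ne hv1)]
      by_cases hv2 : (l : ℕ) = i + 1
      · have h2 : l = (⟨i + 1, hj⟩ : Fin n) := Fin.ext hv2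
        subst h2
        rw [if_pos rfl]
        simp only [braid_apply, phiW, Fin.ext_iff, Fin.val_mk]
        split_ifs <;> first | rfl | (exfalso; omega) | (group; done)
      · rw [if_neg (Fin.ne_of_val_ne hv2), braid_apply,
          if_neg (Fin.ne_of_val_ne hv1), if_neg (Fin.ne_of_val_ne hv2)]
        simp only [phiW, Fin.ext_iff, Fin.val_mk]
        split_ifs <;> first | rfl | (exfalso; omega)
  | succ j hij IH =>
    intro hj l
    have hjn : j < n := by omega
    rw [a0_succ n i j hij, MulAut.mul_apply, MulAut.mul_apply, sigmaNat_eq j hj, braid_apply]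
    by_cases hv1 : (l : ℕ) = j
    · have h1 : l = (⟨j, hjn⟩ : Fin n) := Fin.ext hv1
      subst h1
      rw [if_pos rfl]
      simp only [aut_mul, aut_inv_single, IH hjn, phiW, Fin.ext_iff, Fin.val_mk]
      split_ifs <;>
        first
        | (exfalso; omega)
        | (simp only [aut_mul, aut_inv_single, braid_inv_apply, Fin.ext_iff, Fin.val_mk] <;>
            split_ifs <;> first | rfl | (exfalso; omega) | (group; done))
    · rw [if_neg (Fin.ne_of_val_ne hv1)]
      by_cases hv2 : (l : ℕ) = j + 1
      · have h2 : l = (⟨j + 1, hj⟩ : Fin n) := Fin.ext hv2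
        subst h2
        rw [if_pos rfl]
        simp only [aut_mul, aut_inv_single, IH hjn, phiW, Fin.ext_iff, Fin.val_mk]
        split_ifs <;>
          first
          | (exfalso; omega)
          | (simp only [aut_mul, aut_inv_single, braid_inv_apply, Fin.ext_iff, Fin.val_mk] <;>
              split_ifs <;> first | rfl | (exfalso; omega) | (group; done))
      · rw [if_neg (Fin.ne_of_val_ne hv2), IH hjn]
        simp only [phiW, Fin.ext_iff, Fin.val_mk]
        split_ifs <;>
          first
          | (exfalso; omega)
          | (simp only [aut_mul, aut_inv_single, braid_inv_apply, Fin.ext_iff, Fin.val_mk] <;>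
              split_ifs <;> first | rfl | (exfalso; omega) | (group; done))

end PBAux3

set_option maxHeartbeats 1000000 in
/-- Lemma 3.4: in `Aut(F_n)` the pure braid generators are expressed through the
basis-conjugating automorphisms (0-based indices `i < j < n`):
`a_{ij} = ε_{j-1,i} ⋯ ε_{i+1,i} (ε_{ij}⁻¹ ε_{ji}⁻¹) ε_{i+1,i}⁻¹ ⋯ ε_{j-1,i}⁻¹
        = ε_{j-1,j}⁻¹ ⋯ ε_{i+1,j}⁻¹ (ε_{ij}⁻¹ ε_{ji}⁻¹) ε_{i+1,j} ⋯ ε_{j-1,j}`,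
in particular `a_{i,i+1} = ε_{i,i+1}⁻¹ ε_{i+1,i}⁻¹`; each of the paper's words
(composing left-to-right) is transcribed into Mathlib's order (right-to-left). -/
theorem pure_braid_gen_eq_eps (n i j : ℕ) (hij : i < j) (hj : j < n) :
    (a0 n i j =
      ((((List.range (j - 1 - i)).map fun t =>
          eps (⟨j - 1 - t, by omega⟩ : Fin n) (⟨i, by omega⟩ : Fin n)).reverse).prod)⁻¹ *
        ((eps (⟨j, hj⟩ : Fin n) (⟨i, by omega⟩ : Fin n))⁻¹ *
          (eps (⟨i, by omega⟩ : Fin n) (⟨j, hj⟩ : Fin n))⁻¹) *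
        ((((List.range (j - 1 - i)).map fun t =>
          eps (⟨j - 1 - t, by omega⟩ : Fin n) (⟨i, by omega⟩ : Fin n)).reverse).prod)) ∧
    (a0 n i j =
      (((List.range (j - 1 - i)).map fun t =>
          eps (⟨j - 1 - t, by omega⟩ : Fin n) (⟨j, hj⟩ : Fin n)).prod) *
        ((eps (⟨j, hj⟩ : Fin n) (⟨i, by omega⟩ : Fin n))⁻¹ *
          (eps (⟨i, by omega⟩ : Fin n) (⟨j, hj⟩ : Fin n))⁻¹) *
        (((List.range (j - 1 - i)).map fun t =>
          eps (⟨j - 1 - t, by omega⟩ : Fin n) (⟨j, hj⟩ : Fin n)).prod)⁻¹) := by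
  constructor
  · have key1 : ((((List.range (j - 1 - i)).map fun t =>
          eps (⟨j - 1 - t, by omega⟩ : Fin n) (⟨i, by omega⟩ : Fin n)).reverse).prod) *
        a0 n i j =
        ((eps (⟨j, hj⟩ : Fin n) (⟨i, by omega⟩ : Fin n))⁻¹ *
          (eps (⟨i, by omega⟩ : Fin n) (⟨j, hj⟩ : Fin n))⁻¹) *
        ((((List.range (j - 1 - i)).map fun t =>
          eps (⟨j - 1 - t, by omega⟩ : Fin n) (⟨i, by omega⟩ : Fin n)).reverse).prod) := by
      apply PBAux.aut_ext
      intro l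
      simp only [MulAut.mul_apply, PBAux3.a0_apply i j hij hj,
        PBAux2.L1_apply i j (j - 1 - i) (by omega) hj, PBAux3.phiW,
        PBAux.eps_inv_apply, PBAux.eps_apply, PBAux.aut_mul, PBAux.aut_inv_single,
        Fin.ext_iff, Fin.val_mk]
      split_ifs <;>
        first
          | rfl
          | (exfalso; omega)
          | (group; done)
          | (simp only [PBAux2.L1_apply i j (j - 1 - i) (by omega) hj,
              PBAux.eps_inv_apply, PBAux.eps_apply, PBAux.aut_mul, PBAux.aut_inv_single,
              Fin.ext_iff, Fin.val_mk] <;>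
             split_ifs <;>
               first
                 | rfl
                 | (exfalso; omega)
                 | (group; done)
                 | (simp only [PBAux2.L1_apply i j (j - 1 - i) (by omega) hj,
                     PBAux.eps_inv_apply, PBAux.eps_apply, PBAux.aut_mul,
                     PBAux.aut_inv_single, Fin.ext_iff, Fin.val_mk] <;>
                    split_ifs <;> first | rfl | (exfalso; omega) | (group; done)))
    rw [mul_assoc, ← key1, inv_mul_cancel_left]
  · have key2 : a0 n i j *
        (((List.range (j - 1 - i)).map fun t =>
          eps (⟨j - 1 - t, by omega⟩ : Fin n) (⟨j, hj⟩ : Fin n)).prod) =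
        (((List.range (j - 1 - i)).map fun t =>
          eps (⟨j - 1 - t, by omega⟩ : Fin n) (⟨j, hj⟩ : Fin n)).prod) *
        ((eps (⟨j, hj⟩ : Fin n) (⟨i, by omega⟩ : Fin n))⁻¹ *
          (eps (⟨i, by omega⟩ : Fin n) (⟨j, hj⟩ : Fin n))⁻¹) := by
      apply PBAux.aut_ext
      intro l
      simp only [MulAut.mul_apply, PBAux3.a0_apply i j hij hj,
        PBAux2.P_apply i j (j - 1 - i) (by omega) hj, PBAux3.phiW,
        PBAux.eps_inv_apply, PBAux.eps_apply, PBAux.aut_mul, PBAux.aut_inv_single,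
        Fin.ext_iff, Fin.val_mk]
      split_ifs <;>
        first
          | rfl
          | (exfalso; omega)
          | (group; done)
          | (simp only [PBAux2.P_apply i j (j - 1 - i) (by omega) hj,
              PBAux3.a0_apply i j hij hj, PBAux3.phiW,
              PBAux.eps_inv_apply, PBAux.eps_apply, PBAux.aut_mul, PBAux.aut_inv_single,
              Fin.ext_iff, Fin.val_mk] <;>
             split_ifs <;>
               first
                 | rfl
                 | (exfalso; omega)
                 | (group; done)
                 | (simp only [PBAux2.P_apply i j (j - 1 - i) (by omega) hj,
                     PBAux3.a0_apply i j hij hj, PBAux3.phiW,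
                     PBAux.eps_inv_apply, PBAux.eps_apply, PBAux.aut_mul,
                     PBAux.aut_inv_single, Fin.ext_iff, Fin.val_mk] <;>
                    split_ifs <;> first | rfl | (exfalso; omega) | (group; done)))
    rw [← key2, mul_inv_cancel_right]
end

section
/- For every n ≥ 2, the intersection B_n ∩ Inn(F_n) of the braid group B_n with the group of inner automorphisms of F_n is an infinite cyclic group generated by the inner automorphism given by conjugation by the element x_1 x_2 ⋯ x_n. -/
/-- The braid group `B_n` realized inside `Aut(F_n)`, generated by `σ_1, …, σ_{n-1}`. -/
def BraidAut (n : ℕ) : Subgroup (MulAut (FreeGroup (Fin n))) :=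
  Subgroup.closure {e | ∃ k : ℕ, k + 1 < n ∧ e = sigmaNat n k}

lemma isCyclic_of_comm_freeGroup {S : Type*} [Subsingleton S] : IsCyclic (FreeGroup S) := by
  by_cases hS : Nonempty S
  · obtain ⟨s⟩ := hS
    refine ⟨FreeGroup.of s, fun x => ?_⟩
    have : x ∈ Subgroup.closure (Set.range (FreeGroup.of : S → FreeGroup S)) := by
      rw [FreeGroup.closure_range_of]; trivial
    refine Subgroup.closure_le (Subgroup.zpowers (FreeGroup.of s)) |>.mpr ?_ this
    rintro y ⟨t, rfl⟩
    rw [Subsingleton.elim t s]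
    exact Subgroup.mem_zpowers _
  · refine ⟨1, fun x => ?_⟩
    have : x ∈ Subgroup.closure (Set.range (FreeGroup.of : S → FreeGroup S)) := by
      rw [FreeGroup.closure_range_of]; trivial
    refine Subgroup.closure_le (Subgroup.zpowers 1) |>.mpr ?_ this
    rintro y ⟨t, rfl⟩
    exact absurd ⟨t⟩ hS

lemma isCyclic_of_comm_isFreeGroup {G : Type*} [Group G] [IsFreeGroup G]
    (hcomm : ∀ x y : G, Commute x y) : IsCyclic G := by
  haveI : Subsingleton (IsFreeGroup.Generators G) := by
    by_contra h
    rw [not_subsingleton_iff_nontrivial] at h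
    obtain ⟨g₁, g₂, hne⟩ := h
    classical
    set f : IsFreeGroup.Generators G → Equiv.Perm (Fin 3) :=
      fun x => if x = g₁ then Equiv.swap 0 1 else Equiv.swap 1 2 with hf
    have hc : Commute (Equiv.swap (0:Fin 3) 1) (Equiv.swap (1:Fin 3) 2) := by
      have := hcomm (IsFreeGroup.of g₁) (IsFreeGroup.of g₂)
      have h2 := congrArg (IsFreeGroup.lift f) this
      simpa [hf, map_mul, IsFreeGroup.lift_of, hne, Ne.symm, Commute, SemiconjBy] using h2
    have := congrArg (fun e : Equiv.Perm (Fin 3) => e 0) hc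
    simp [Equiv.Perm.mul_apply, Equiv.swap_apply_of_ne_of_ne] at this
  haveI : IsCyclic (FreeGroup (IsFreeGroup.Generators G)) := isCyclic_of_comm_freeGroup
  exact isCyclic_of_surjective (IsFreeGroup.toFreeGroup G).symm (IsFreeGroup.toFreeGroup G).symm.surjective

/-- Two commuting elements of a free group are powers of a common element. -/
lemma commute_exists_common {α : Type*} (a b : FreeGroup α) (h : Commute a b) :
    ∃ c : FreeGroup α, a ∈ Subgroup.zpowers c ∧ b ∈ Subgroup.zpowers c := by
  set H : Subgroup (FreeGroup α) := Subgroup.closure {a, b} with hH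
  have hcomm : ∀ x y : H, Commute x y := by
    rintro ⟨x, hx⟩ ⟨y, hy⟩
    have key : ∀ x ∈ H, ∀ y ∈ H, Commute x y := by
      intro x hx
      induction hx using Subgroup.closure_induction with
      | mem z hz =>
        intro y hy
        induction hy using Subgroup.closure_induction with
        | mem w hw =>
          rcases hz with rfl | rfl <;> rcases hw with rfl | rfl
          · exact Commute.refl _
          · exact h
          · exact h.symm
          · exact Commute.refl _
        | one => exact Commute.one_right _
        | mul w₁ w₂ _ _ h1 h2 => exact h1.mul_right h2
        | inv w _ h1 => exact h1.inv_right
      | one => intro y hy; exact Commute.one_left _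
      | mul x₁ x₂ _ _ h1 h2 => intro y hy; exact (h1 y hy).mul_left (h2 y hy)
      | inv x _ h1 => intro y hy; exact (h1 y hy).inv_left
    have := key x hx y hy
    exact Subtype.ext (by simpa [Commute, SemiconjBy] using this)
  haveI : IsCyclic H := isCyclic_of_comm_isFreeGroup hcomm
  obtain ⟨c, hc⟩ := IsCyclic.exists_generator (α := H)
  have haH : a ∈ H := Subgroup.subset_closure (by simp)
  have hbH : b ∈ H := Subgroup.subset_closure (by simp)
  refine ⟨(c : FreeGroup α), ?_, ?_⟩
  · obtain ⟨i, hi⟩ := hc ⟨a, haH⟩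
    exact ⟨i, by simp only []; rw [← Subgroup.coe_zpow]; exact congrArg Subtype.val hi⟩
  · obtain ⟨j, hj⟩ := hc ⟨b, hbH⟩
    exact ⟨j, by simp only []; rw [← Subgroup.coe_zpow]; exact congrArg Subtype.val hj⟩

/-- exponent-count homomorphism -/
def expHom {n : ℕ} (i : Fin n) : FreeGroup (Fin n) →* Multiplicative ℤ :=
  FreeGroup.lift fun j => Multiplicative.ofAdd (if j = i then 1 else 0)

@[simp] lemma expHom_of {n : ℕ} (i j : Fin n) :
    expHom i (FreeGroup.of j) = Multiplicative.ofAdd (if j = i then 1 else 0) := by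
  simp [expHom]

/-- If `w` commutes with `x` and some hom to `ℤ` sends `x` to `1`, then `w ∈ ⟨x⟩`. -/
lemma mem_zpowers_of_commute {α : Type*} (φ : FreeGroup α →* Multiplicative ℤ)
    (x w : FreeGroup α) (hφ : φ x = Multiplicative.ofAdd 1) (h : Commute w x) :
    w ∈ Subgroup.zpowers x := by
  obtain ⟨c, ⟨i, hi⟩, ⟨j, hj⟩⟩ := commute_exists_common w x h
  simp only [] at hi hj
  have hx : Multiplicative.toAdd (φ c) * j = 1 := by
    have := congrArg Multiplicative.toAdd (congrArg φ hj)
    rw [map_zpow, hφ] at this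
    simpa [mul_comm] using this
  have hu : IsUnit j := IsUnit.of_mul_eq_one (a := j) (Multiplicative.toAdd (φ c)) (by linarith [hx])
  rcases Int.isUnit_iff.mp hu with rfl | rfl
  · rw [zpow_one] at hj
    subst hj
    exact ⟨i, hi⟩
  · have : c = x⁻¹ := by rw [← hj]; simp
    subst this
    exact ⟨-i, by rw [← hi]; simp⟩


lemma braidGen_apply {n : ℕ} (i j l : Fin n) :
    braidGen i j (FreeGroup.of l) =
      if l = i then FreeGroup.of i * FreeGroup.of j * (FreeGroup.of i)⁻¹
      else if l = j then FreeGroup.of i else FreeGroup.of l := by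
  have : (braidGen i j : FreeGroup (Fin n) → FreeGroup (Fin n)) = FreeGroup.lift _ :=
    MonoidHom.toMulEquiv_apply _ _ _ _
  rw [show (braidGen i j) (FreeGroup.of l) = FreeGroup.lift _ (FreeGroup.of l) from congrFun this _,
    FreeGroup.lift_apply_of]

lemma sigmaNat_apply {n k : ℕ} (h : k + 1 < n) (l : Fin n) :
    sigmaNat n k (FreeGroup.of l) =
      if l.val = k then FreeGroup.of ⟨k, by omega⟩ * FreeGroup.of ⟨k+1, h⟩ * (FreeGroup.of ⟨k, by omega⟩)⁻¹
      else if l.val = k + 1 then FreeGroup.of ⟨k, by omega⟩ else FreeGroup.of l := by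
  rw [sigmaNat, dif_pos h, braidGen_apply]
  congr 1 <;> [skip; congr 1] <;> simp [Fin.ext_iff]

def Tp (n : ℕ) : ℕ → ℕ → MulAut (FreeGroup (Fin n))
  | 0, _ => 1
  | (d+1), j => sigmaNat n j * Tp n d (j+1)

lemma Tp_spec (n : ℕ) : ∀ d j (hd : j + d + 1 = n) (i : Fin n),
    Tp n d j (FreeGroup.of i) =
      if h1 : i.val < j then FreeGroup.of i
      else if h2 : i.val = n - 1 then FreeGroup.of ⟨j, by omega⟩
      else FreeGroup.of ⟨j, by omega⟩ *
        FreeGroup.of ⟨i.val + 1, by have := i.isLt; omega⟩ *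
        (FreeGroup.of ⟨j, by omega⟩)⁻¹ := by
  intro d
  induction d with
  | zero =>
    intro j hd i
    have hTp : Tp n 0 j = 1 := rfl
    rw [hTp]
    have hi : i.val < n := i.isLt
    by_cases h1 : i.val < j
    · simp [h1]
    · have h2 : i.val = n - 1 := by omega
      rw [dif_neg h1, dif_pos h2, MulAut.one_apply]
      congr 1
      exact Fin.ext (show i.val = j by omega)
  | succ d ih =>
    intro j hd i
    have hT : Tp n (d+1) j = sigmaNat n j * Tp n d (j+1) := rfl
    have hj1 : j + 1 < n := by omega
    have hi : i.val < n := i.isLt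
    rw [hT, MulAut.mul_apply, ih (j+1) (by omega) i]
    by_cases h1 : i.val < j
    · rw [dif_pos (by omega : i.val < j + 1), sigmaNat_apply hj1,
        if_neg (by omega), if_neg (by omega), dif_pos h1]
    · by_cases h0 : i.val = j
      · rw [dif_pos (by omega : i.val < j + 1), sigmaNat_apply hj1, if_pos h0, dif_neg h1,
          dif_neg (by omega : ¬ i.val = n - 1)]
        subst h0
        rfl
      · rw [dif_neg (by omega : ¬ i.val < j + 1)]
        by_cases h2 : i.val = n - 1
        · rw [dif_pos h2, sigmaNat_apply hj1,
            if_neg (by simp), if_pos (by simp), dif_neg h1, dif_pos h2]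
        · rw [dif_neg h2, _root_.map_mul, _root_.map_mul, _root_.map_inv,
            sigmaNat_apply hj1 (⟨j+1, by omega⟩ : Fin n),
            sigmaNat_apply hj1 (⟨i.val+1, by omega⟩ : Fin n),
            if_neg (by simp), if_pos (by simp),
            if_neg (by simp; omega), if_neg (by simp; omega),
            dif_neg h1, dif_neg h2]

section
variable {G : Type*} [Group G]

lemma conj_swap (ρ : MulAut G) (w : G) :
    ρ * MulAut.conj w = MulAut.conj (ρ w) * ρ := by
  ext x
  simp [MulAut.mul_apply, MulAut.conj_apply, map_mul, map_inv]

lemma conj_mul_aut_pow (a : G) (ρ : MulAut G) (M : ℕ) :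
    (MulAut.conj a * ρ) ^ M =
      MulAut.conj (List.ofFn fun k : Fin M => (ρ ^ (k : ℕ)) a).prod * ρ ^ M := by
  induction M with
  | zero => simp
  | succ M ih =>
    rw [pow_succ', ih, List.ofFn_succ]
    have hmap : (ρ : G → G) ∘ (fun k : Fin M => (ρ ^ (k : ℕ)) a)
        = fun k : Fin M => (ρ ^ ((k.succ : Fin (M+1)) : ℕ)) a := by
      funext k
      simp [Fin.val_succ, pow_succ', MulAut.mul_apply]
    calc MulAut.conj a * ρ * (MulAut.conj (List.ofFn fun k : Fin M => (ρ ^ (k : ℕ)) a).prod * ρ ^ M)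
        = MulAut.conj a * (ρ * MulAut.conj (List.ofFn fun k : Fin M => (ρ ^ (k : ℕ)) a).prod) * ρ ^ M := by
          group
      _ = MulAut.conj a * (MulAut.conj (ρ (List.ofFn fun k : Fin M => (ρ ^ (k : ℕ)) a).prod) * ρ) * ρ ^ M := by
          rw [conj_swap]
      _ = MulAut.conj (a * ρ (List.ofFn fun k : Fin M => (ρ ^ (k : ℕ)) a).prod) * ρ ^ (M+1) := by
          rw [map_mul]; group
      _ = _ := by
        rw [map_list_prod, List.map_ofFn, hmap, List.prod_cons]
        congr 2

end

lemma freeGroupCongr_of' {α β} (e : α ≃ β) (a : α) :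
    FreeGroup.freeGroupCongr e (FreeGroup.of a) = FreeGroup.of (e a) := by
  simp

lemma mulAut_ext_s10 {α : Type*} (e₁ e₂ : MulAut (FreeGroup α))
    (h : ∀ i, e₁ (FreeGroup.of i) = e₂ (FreeGroup.of i)) : e₁ = e₂ :=
  MulEquiv.toMonoidHom_injective (FreeGroup.ext_hom _ _ h)

open Fin.NatCast Fin.CommRing in
lemma finRotate_pow (m k : ℕ) (i : Fin (m + 2)) :
    ((finRotate (m + 2)) ^ k) i = i + (k : Fin (m + 2)) := by
  induction k generalizing i with
  | zero => simp
  | succ k ih =>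
    rw [pow_succ, Equiv.Perm.mul_apply, finRotate_succ_apply, ih]
    push_cast
    ring

lemma rho_pow_of {n : ℕ} (k : ℕ) (i : Fin n) :
    ((FreeGroup.freeGroupCongr (finRotate n)) ^ k) (FreeGroup.of i)
      = FreeGroup.of (((finRotate n) ^ k) i) := by
  induction k generalizing i with
  | zero => simp
  | succ k ih =>
    rw [pow_succ, MulAut.mul_apply, freeGroupCongr_of', pow_succ, Equiv.Perm.mul_apply, ← ih]

lemma rho_pow_n (m : ℕ) :
    (FreeGroup.freeGroupCongr (finRotate (m + 2))) ^ (m + 2) = 1 := by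
  apply mulAut_ext_s10
  intro i
  rw [rho_pow_of, finRotate_pow]
  simp

/-- If two `Fin`-indexed tuples agree except at adjacent positions `k, k+1`, where the
pairwise products agree, then the list products agree. -/
lemma prod_eq_of_pair {M : Type*} [Monoid M] :
    ∀ (n k : ℕ) (hk : k + 1 < n) (f g : Fin n → M)
      (hout : ∀ i : Fin n, i.val ≠ k → i.val ≠ k + 1 → f i = g i)
      (hpair : f ⟨k, by omega⟩ * f ⟨k+1, hk⟩ = g ⟨k, by omega⟩ * g ⟨k+1, hk⟩),
      (List.ofFn f).prod = (List.ofFn g).prod := by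
  intro n
  induction n with
  | zero => intro k hk; omega
  | succ n ih =>
    intro k hk f g hout hpair
    match k with
    | 0 =>
      match n, hk with
      | (n+1), _ =>
        rw [List.ofFn_succ, List.ofFn_succ (f := fun i : Fin (n+2) => g i),
          List.ofFn_succ, List.ofFn_succ (f := fun i : Fin (n+1) => g i.succ)]
        rw [List.prod_cons, List.prod_cons, List.prod_cons, List.prod_cons,
          ← mul_assoc, ← mul_assoc]
        have h1 : f 0 * f (Fin.succ 0) = g 0 * g (Fin.succ 0) := by
          convert hpair using 3 <;> exact Fin.ext rfl
        rw [h1]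
        congr 2
        congr 1
        funext i
        exact hout _ (by simp [Fin.val_succ]) (by simp [Fin.val_succ])
    | (k+1) =>
      rw [List.ofFn_succ, List.ofFn_succ (f := fun i : Fin (n+1) => g i),
        List.prod_cons, List.prod_cons]
      have h0 : f 0 = g 0 := hout 0 (by simp) (by simp)
      rw [h0]
      congr 1
      refine ih k (by omega) (fun i => f i.succ) (fun i => g i.succ) ?_ ?_
      · intro i h1 h2
        exact hout i.succ (by simp [Fin.val_succ]; omega) (by simp [Fin.val_succ]; omega)
      · convert hpair using 3 <;> exact Fin.ext (by simp [Fin.val_succ])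


/-- The element `x_1 x_2 ⋯ x_n`. -/
def delta (n : ℕ) : FreeGroup (Fin n) := (List.ofFn fun i : Fin n => FreeGroup.of i).prod

lemma sigma_fix {n k : ℕ} (hk : k + 1 < n) : sigmaNat n k (delta n) = delta n := by
  rw [delta, map_list_prod, List.map_ofFn]
  refine prod_eq_of_pair n k hk _ _ ?_ ?_
  · intro i h1 h2
    simp only [Function.comp_apply]
    rw [sigmaNat_apply hk, if_neg h1, if_neg h2]
  · simp only [Function.comp_apply]
    rw [sigmaNat_apply hk, sigmaNat_apply hk, if_pos rfl, if_neg (by simp), if_pos rfl]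
    group

lemma braid_fixes {n : ℕ} {β : MulAut (FreeGroup (Fin n))} (hβ : β ∈ BraidAut n) :
    β (delta n) = delta n := by
  induction hβ using Subgroup.closure_induction with
  | mem x hx => obtain ⟨k, hk, rfl⟩ := hx; exact sigma_fix hk
  | one => rfl
  | mul x y hx hy h1 h2 => rw [MulAut.mul_apply, h2, h1]
  | inv x hx h1 =>
    conv_lhs => rw [← h1]
    rw [← MulAut.mul_apply, inv_mul_cancel, MulAut.one_apply]

lemma Tp_mem (n : ℕ) : ∀ d j, j + d + 1 ≤ n → Tp n d j ∈ BraidAut n := by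
  intro d
  induction d with
  | zero => intro j _; exact Subgroup.one_mem _
  | succ d ih =>
    intro j hj
    exact Subgroup.mul_mem _ (Subgroup.subset_closure ⟨j, by omega, rfl⟩) (ih (j+1) (by omega))

lemma expHom_delta {n : ℕ} (i : Fin n) :
    expHom i (delta n) = Multiplicative.ofAdd 1 := by
  rw [delta, map_list_prod, List.map_ofFn]
  rw [show ((expHom i : FreeGroup (Fin n) → Multiplicative ℤ) ∘ fun j : Fin n => FreeGroup.of j)
      = fun j : Fin n => Multiplicative.ofAdd (if j = i then (1:ℤ) else 0) from
    funext fun j => expHom_of i j]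
  rw [List.prod_ofFn, ← ofAdd_sum]
  congr 1
  simp

lemma conj_delta_mem (m : ℕ) : MulAut.conj (delta (m+2)) ∈ BraidAut (m+2) := by
  set ρ : MulAut (FreeGroup (Fin (m+2))) := FreeGroup.freeGroupCongr (finRotate (m+2)) with hρ
  have hc : Tp (m+2) (m+1) 0 = MulAut.conj (FreeGroup.of (0 : Fin (m+2))) * ρ := by
    apply mulAut_ext_s10
    intro i
    rw [Tp_spec (m+2) (m+1) 0 (by omega) i, MulAut.mul_apply, hρ, freeGroupCongr_of',
      MulAut.conj_apply]
    rw [dif_neg (by omega : ¬ i.val < 0)]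
    by_cases h2 : i.val = m + 2 - 1
    · rw [dif_pos h2]
      have hi : i = Fin.last (m+1) := Fin.ext (by simpa using h2)
      subst hi
      rw [finRotate_last, mul_inv_cancel_right]
      have h0 : (⟨0, by omega⟩ : Fin (m+2)) = 0 := Fin.ext (by simp)
      rw [h0]
    · rw [dif_neg h2, finRotate_succ_apply]
      have h0 : (⟨0, by omega⟩ : Fin (m+2)) = 0 := Fin.ext (by simp)
      have h1 : (⟨i.val + 1, by omega⟩ : Fin (m+2)) = i + 1 := by
        apply Fin.ext
        rw [Fin.val_add_one_of_lt (by rw [Fin.lt_iff_val_lt_val, Fin.val_last]; omega)]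
      rw [h0, h1]
  have key : (Tp (m+2) (m+1) 0) ^ (m+2) = MulAut.conj (delta (m+2)) := by
    rw [hc, conj_mul_aut_pow, rho_pow_n, mul_one]
    congr 1
    rw [delta]
    have hfun : (fun k : Fin (m+2) => (ρ ^ (k:ℕ)) (FreeGroup.of (0 : Fin (m+2))))
        = fun k : Fin (m+2) => FreeGroup.of k := by
      funext k
      rw [hρ, rho_pow_of, finRotate_pow]
      congr 1
      simp
    rw [hfun]
  rw [← key]
  exact Subgroup.pow_mem _ (Tp_mem (m+2) (m+1) 0 (by omega)) _

/-- Proposition 4.2: for every `n ≥ 2`, the intersection `B_n ∩ Inn(F_n)` is the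
infinite cyclic group generated by the inner automorphism of conjugation by
`x_1 x_2 ⋯ x_n`. -/
theorem braid_inter_inner (n : ℕ) (hn : 2 ≤ n) :
    BraidAut n ⊓ (MulAut.conj : FreeGroup (Fin n) →* MulAut (FreeGroup (Fin n))).range =
      Subgroup.zpowers (MulAut.conj ((List.ofFn fun i : Fin n => FreeGroup.of i).prod)) ∧
    ¬ IsOfFinOrder (MulAut.conj ((List.ofFn fun i : Fin n => FreeGroup.of i).prod)) := by
  obtain ⟨m, rfl⟩ : ∃ m, n = m + 2 := ⟨n - 2, by omega⟩
  have hΔ : (List.ofFn fun i : Fin (m+2) => FreeGroup.of i).prod = delta (m+2) := rfl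
  constructor
  · apply le_antisymm
    · rintro β hβ
      rw [Subgroup.mem_inf] at hβ
      obtain ⟨hB, w, rfl⟩ := hβ
      have hfix : MulAut.conj w (delta (m+2)) = delta (m+2) := braid_fixes hB
      rw [MulAut.conj_apply] at hfix
      have hcomm : Commute w (delta (m+2)) := by
        rw [Commute, SemiconjBy]
        conv_rhs => rw [← hfix]
        group
      obtain ⟨z, hz⟩ := mem_zpowers_of_commute (expHom ⟨0, by omega⟩) _ w
        (expHom_delta _) hcomm
      simp only [] at hz
      exact ⟨z, by simp only []; rw [hΔ, ← map_zpow]; exact congrArg _ hz⟩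
    · rw [Subgroup.zpowers_le]
      rw [Subgroup.mem_inf]
      exact ⟨by rw [hΔ]; exact conj_delta_mem m, ⟨_, rfl⟩⟩
  · intro hf
    obtain ⟨M, hM, hMone⟩ := isOfFinOrder_iff_pow_eq_one.mp hf
    rw [hΔ] at hMone
    have h1 : MulAut.conj ((delta (m+2)) ^ M) = 1 := by rw [map_pow, hMone]
    have happ := congrArg
      (fun e : MulAut (FreeGroup (Fin (m+2))) => e (FreeGroup.of ⟨1, by omega⟩)) h1
    simp only [MulAut.conj_apply, MulAut.one_apply] at happ
    have hcomm : Commute ((delta (m+2)) ^ M) (FreeGroup.of (⟨1, by omega⟩ : Fin (m+2))) := by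
      rw [Commute, SemiconjBy]
      conv_rhs => rw [← happ]
      group
    obtain ⟨z, hz⟩ := mem_zpowers_of_commute (expHom ⟨1, by omega⟩)
      (FreeGroup.of (⟨1, by omega⟩ : Fin (m+2))) ((delta (m+2)) ^ M)
      (by rw [expHom_of]; simp) hcomm
    simp only [] at hz
    have hcontra := congrArg (expHom (⟨0, by omega⟩ : Fin (m+2))) hz
    rw [map_zpow, map_pow, expHom_of, expHom_delta] at hcontra
    rw [if_neg (by simp [Fin.ext_iff])] at hcontra
    have := congrArg Multiplicative.toAdd hcontra
    simp at this
    omega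
end
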